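/- Master recursion under proximal-PL: let f be L-smooth, Ω proper closed convex, 0 < η ≤ 1/(2L). Let x_{t+1} = prox_Ω(x_t - η g_t) where g_t = ∇f(x_t) + ξ_t with E[ξ_t | x_t] = 0 and E[‖ξ_t‖² | x_t] ≤ σ². Set F = ηf + Ω, F* = inf F, G(x) = x - prox_Ω(x - η∇f(x)), and assume the proximal-PL inequality (1/2)‖G(x)‖² ≥ μ(F(x) - F*) for all x, with μ > 0. Then Δ_t = E[F(x_t) - F*] satisfies Δ_{t+1} ≤ (1 - μ(1 - ηL)/4)·Δ_t + η²σ²·((1 - ηL)/4 + 1/(1 - ηL)). -/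

import Mathlib

open MeasureTheory


lemma prox_growth {E : Type*} [NormedAddCommGroup E] [InnerProductSpace ℝ E]
    (Ω : E → ℝ) (hΩ : ConvexOn ℝ Set.univ Ω) (prox : E → E)
    (hprox : ∀ z y, Ω (prox z) + (1 / 2) * ‖prox z - z‖ ^ 2 ≤
      Ω y + (1 / 2) * ‖y - z‖ ^ 2)
    (z y : E) :
    Ω (prox z) + (1 / 2) * ‖prox z - z‖ ^ 2 + (1 / 2) * ‖y - prox z‖ ^ 2 ≤
      Ω y + (1 / 2) * ‖y - z‖ ^ 2 := by
  set p := prox z with hp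
  have key : ∀ t : ℝ, 0 < t → t ≤ 1 →
      (1 - t) / 2 * ‖y - p‖ ^ 2 ≤
        (Ω y + (1 / 2) * ‖y - z‖ ^ 2) - (Ω p + (1 / 2) * ‖p - z‖ ^ 2) := by
    intro t ht ht1
    have hco := hΩ.2 (Set.mem_univ p) (Set.mem_univ y)
      (by linarith : (0:ℝ) ≤ 1 - t) ht.le (by ring)
    simp only [smul_eq_mul] at hco
    have hmin := hprox z ((1 - t) • p + t • y)
    rw [← hp] at hmin
    have hsplit : ((1 - t) • p + t • y) - z = (1 - t) • (p - z) + t • (y - z) := by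
      module
    have e1 : ‖((1 - t) • p + t • y) - z‖ ^ 2 =
        (1 - t) ^ 2 * ‖p - z‖ ^ 2 + 2 * ((1 - t) * t) * (inner ℝ (p - z) (y - z) : ℝ)
          + t ^ 2 * ‖y - z‖ ^ 2 := by
      rw [hsplit, @norm_add_sq_real, real_inner_smul_left, real_inner_smul_right,
        norm_smul, norm_smul, Real.norm_eq_abs, Real.norm_eq_abs,
        abs_of_nonneg (by linarith : (0:ℝ) ≤ 1 - t), abs_of_nonneg ht.le]
      ring
    have e2 : ‖y - p‖ ^ 2 = ‖y - z‖ ^ 2 - 2 * (inner ℝ (p - z) (y - z) : ℝ) + ‖p - z‖ ^ 2 := by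
      have h4 : y - p = (y - z) - (p - z) := by module
      rw [h4, @norm_sub_sq_real, real_inner_comm]
    have key' : t * ((1 - t) / 2 * ‖y - p‖ ^ 2) ≤
        t * ((Ω y + (1 / 2) * ‖y - z‖ ^ 2) - (Ω p + (1 / 2) * ‖p - z‖ ^ 2)) := by
      nlinarith [hmin, hco, e1, e2]
    exact le_of_mul_le_mul_left key' ht
  have hD : (1:ℝ)/2 * ‖y - p‖ ^ 2 ≤
      (Ω y + (1 / 2) * ‖y - z‖ ^ 2) - (Ω p + (1 / 2) * ‖p - z‖ ^ 2) := by
    set D := (Ω y + (1 / 2) * ‖y - z‖ ^ 2) - (Ω p + (1 / 2) * ‖p - z‖ ^ 2) with hDdef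
    set K := ‖y - p‖ ^ 2 with hK
    have hK0 : 0 ≤ K := by positivity
    refine le_of_forall_pos_le_add ?_
    intro ε hε
    have ht0 : 0 < min 1 (2 * ε / (K + 1)) := by positivity
    have ht1 : min 1 (2 * ε / (K + 1)) ≤ 1 := min_le_left _ _
    have h := key _ ht0 ht1
    have hK1 : (0:ℝ) < K + 1 := by linarith
    have h2 : min 1 (2 * ε / (K + 1)) / 2 * K ≤ ε := by
      have hm : min 1 (2 * ε / (K + 1)) * K ≤ (2 * ε / (K + 1)) * K :=
        mul_le_mul_of_nonneg_right (min_le_right _ _) hK0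
      have hm2 : (2 * ε / (K + 1)) * K ≤ 2 * ε := by
        rw [div_mul_eq_mul_div, div_le_iff₀ hK1]
        nlinarith [hε.le, hK0]
      linarith
    linarith
  linarith

lemma prox_lip {E : Type*} [NormedAddCommGroup E] [InnerProductSpace ℝ E]
    (Ω : E → ℝ) (hΩ : ConvexOn ℝ Set.univ Ω) (prox : E → E)
    (hprox : ∀ z y, Ω (prox z) + (1 / 2) * ‖prox z - z‖ ^ 2 ≤
      Ω y + (1 / 2) * ‖y - z‖ ^ 2)
    (z w : E) : ‖prox z - prox w‖ ≤ ‖z - w‖ := by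
  have h1 := prox_growth Ω hΩ prox hprox z (prox w)
  have h2 := prox_growth Ω hΩ prox hprox w (prox z)
  set a := prox z
  set b := prox w
  have hin : ‖a - b‖ ^ 2 ≤ (inner ℝ (a - b) (z - w) : ℝ) := by
    have hns : ‖b - a‖ ^ 2 = ‖a - b‖ ^ 2 := by rw [norm_sub_rev]
    have eb : ‖b - z‖ ^ 2 = ‖b - a‖ ^ 2 + 2 * (inner ℝ (b - a) (a - z) : ℝ) + ‖a - z‖ ^ 2 := by
      rw [show b - z = (b - a) + (a - z) by module, @norm_add_sq_real]
    have ea : ‖a - w‖ ^ 2 = ‖a - b‖ ^ 2 + 2 * (inner ℝ (a - b) (b - w) : ℝ) + ‖b - w‖ ^ 2 := by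
      rw [show a - w = (a - b) + (b - w) by module, @norm_add_sq_real]
    have es : (inner ℝ (a - b) (z - w) : ℝ) =
        ‖a - b‖ ^ 2 + (inner ℝ (b - a) (a - z) : ℝ) + (inner ℝ (a - b) (b - w) : ℝ) := by
      have h4 : z - w = (a - b) - (a - z) + (b - w) := by module
      have h5 : (inner ℝ (b - a) (a - z) : ℝ) = -(inner ℝ (a - b) (a - z) : ℝ) := by
        rw [← neg_sub a b, inner_neg_left]
      rw [h4, inner_add_right, inner_sub_right, h5, real_inner_self_eq_norm_sq]
      ring
    linarith [h1, h2]
  have hcs := real_inner_le_norm (a - b) (z - w)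
  nlinarith [norm_nonneg (a - b), norm_nonneg (z - w), hin, hcs]

set_option maxHeartbeats 1600000

/-- master recursion under proximal-PL. With F = ηf + Ω, F* = inf F,
G(x) = x − prox_Ω(x − η∇f(x)), proximal-PL constant μPL > 0, unbiased gradient noise ξ with
conditional second moment ≤ σ², and update x_{t+1} = prox_Ω(x_t − η(∇f(x_t) + ξ)), the
expected gaps satisfy
`Δ_{t+1} ≤ (1 − μPL(1 − ηL)/4)·Δ_t + η²σ²·((1 − ηL)/4 + 1/(1 − ηL))`. -/
theorem master_recursion_prox_PL (n : ℕ)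
    (f : EuclideanSpace ℝ (Fin n) → ℝ)
    (f' : EuclideanSpace ℝ (Fin n) → EuclideanSpace ℝ (Fin n))
    (Ω : EuclideanSpace ℝ (Fin n) → ℝ)
    (L η σ μPL Fstar : ℝ)
    (hL : 0 < L) (hη : 0 < η) (hη2 : η ≤ 1 / (2 * L)) (hμ : 0 < μPL)
    (hgrad : ∀ x, HasGradientAt f (f' x) x)
    (hsmooth : ∀ x y, f y ≤ f x + (inner ℝ (f' x) (y - x) : ℝ) + (L / 2) * ‖y - x‖ ^ 2)
    (hΩconv : ConvexOn ℝ Set.univ Ω) (hΩlsc : LowerSemicontinuous Ω)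
    (prox : EuclideanSpace ℝ (Fin n) → EuclideanSpace ℝ (Fin n))
    (hprox : ∀ z y, Ω (prox z) + (1 / 2) * ‖prox z - z‖ ^ 2 ≤
      Ω y + (1 / 2) * ‖y - z‖ ^ 2)
    (F : EuclideanSpace ℝ (Fin n) → ℝ) (hF : F = fun p => η * f p + Ω p)
    (hFstar : ∀ p, Fstar ≤ F p)
    (hPL : ∀ p, μPL * (F p - Fstar) ≤ (1 / 2) * ‖p - prox (p - η • f' p)‖ ^ 2)
    {W : Type*} [MeasurableSpace W] (μ : Measure W) [IsProbabilityMeasure μ]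
    (xt ξ xt1 : W → EuclideanSpace ℝ (Fin n))
    (hxt : Measurable xt) (hξ : Measurable ξ)
    (hmean : μ[ξ | MeasurableSpace.comap xt inferInstance] =ᵐ[μ] 0)
    (hvar : ∀ᵐ ω ∂μ,
      (μ[(fun ω' => ‖ξ ω'‖ ^ 2) | MeasurableSpace.comap xt inferInstance]) ω ≤ σ ^ 2)
    (hupd : ∀ ω, xt1 ω = prox (xt ω - η • (f' (xt ω) + ξ ω)))
    (hintF : Integrable (fun ω => F (xt ω)) μ)
    (hintF1 : Integrable (fun ω => F (xt1 ω)) μ)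
    (hintξ : Integrable (fun ω => ‖ξ ω‖ ^ 2) μ) :
    ∫ ω, (F (xt1 ω) - Fstar) ∂μ ≤
      (1 - μPL * (1 - η * L) / 4) * ∫ ω, (F (xt ω) - Fstar) ∂μ +
        η ^ 2 * σ ^ 2 * ((1 - η * L) / 4 + 1 / (1 - η * L)) := by
  have hβ : 0 < 1 - η * L := by
    have h2L : (0:ℝ) < 2 * L := by linarith
    rw [le_div_iff₀ h2L] at hη2
    nlinarith
  -- pointwise one-step inequality
  have hpoint : ∀ ω, F (xt1 ω) - Fstar ≤
      (1 - μPL * (1 - η * L) / 4) * (F (xt ω) - Fstar) +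
        (η ^ 2 * ((1 - η * L) / 4 + 1 / (1 - η * L))) * ‖ξ ω‖ ^ 2 := by
    intro ω
    set x := xt ω with hx
    set ξ₀ := ξ ω with hξ₀
    set g := f' x + ξ₀ with hg
    set p := prox (x - η • g) with hpdef
    set pbar := prox (x - η • f' x) with hpbar
    have hup : xt1 ω = p := by rw [hupd ω]
    -- step 1: prox minimality at z = x - η•g, y = x
    have h1 := hprox (x - η • g) x
    rw [← hpdef] at h1
    have e1 : ‖p - (x - η • g)‖ ^ 2 =
        ‖p - x‖ ^ 2 + 2 * (η * (inner ℝ g (p - x) : ℝ)) + η ^ 2 * ‖g‖ ^ 2 := by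
      rw [show p - (x - η • g) = (p - x) + η • g by module, @norm_add_sq_real,
        real_inner_smul_right, norm_smul, Real.norm_eq_abs, abs_of_pos hη,
        real_inner_comm]
      ring
    have e2 : ‖x - (x - η • g)‖ ^ 2 = η ^ 2 * ‖g‖ ^ 2 := by
      rw [show x - (x - η • g) = η • g by module, norm_smul, Real.norm_eq_abs,
        abs_of_pos hη]
      ring
    have e3 : (inner ℝ g (p - x) : ℝ) =
        (inner ℝ (f' x) (p - x) : ℝ) + (inner ℝ ξ₀ (p - x) : ℝ) := by
      rw [hg, inner_add_left]
    -- step 2: smoothness, multiplied by η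
    have h2 : η * f p ≤ η * (f x + (inner ℝ (f' x) (p - x) : ℝ) + (L / 2) * ‖p - x‖ ^ 2) :=
      mul_le_mul_of_nonneg_left (hsmooth x p) hη.le
    -- descent: F p ≤ F x - (1-ηL)/2 ‖p-x‖² - η⟨ξ₀, p-x⟩
    have hFp : F p = η * f p + Ω p := by rw [hF]
    have hFx : F x = η * f x + Ω x := by rw [hF]
    have hdesc : F p ≤ F x - (1 - η * L) / 2 * ‖p - x‖ ^ 2 - η * (inner ℝ ξ₀ (p - x) : ℝ) := by
      have e3' : η * (inner ℝ g (p - x) : ℝ) =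
          η * (inner ℝ (f' x) (p - x) : ℝ) + η * (inner ℝ ξ₀ (p - x) : ℝ) := by
        rw [e3]; ring
      rw [hFp, hFx]
      linarith [h1, h2, e1, e2, e3']
    -- Young
    have hyoung : -(η * (inner ℝ ξ₀ (p - x) : ℝ)) ≤
        (1 - η * L) / 4 * ‖p - x‖ ^ 2 + η ^ 2 * (1 / (1 - η * L)) * ‖ξ₀‖ ^ 2 := by
      have hcs : |(inner ℝ ξ₀ (p - x) : ℝ)| ≤ ‖ξ₀‖ * ‖p - x‖ := abs_real_inner_le_norm _ _
      have h5 : η * -(inner ℝ ξ₀ (p - x) : ℝ) ≤ η * (‖ξ₀‖ * ‖p - x‖) :=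
        mul_le_mul_of_nonneg_left (neg_le.mp (abs_le.mp hcs).1) hη.le
      have h6 : η * (‖ξ₀‖ * ‖p - x‖) ≤
          (1 - η * L) / 4 * ‖p - x‖ ^ 2 + η ^ 2 * (1 / (1 - η * L)) * ‖ξ₀‖ ^ 2 := by
        rw [← mul_le_mul_iff_of_pos_right hβ]
        have hβne : (1 - η * L) ≠ 0 := ne_of_gt hβ
        have expand : ((1 - η * L) / 4 * ‖p - x‖ ^ 2
            + η ^ 2 * (1 / (1 - η * L)) * ‖ξ₀‖ ^ 2) * (1 - η * L)
            = (1 - η * L) ^ 2 / 4 * ‖p - x‖ ^ 2 + η ^ 2 * ‖ξ₀‖ ^ 2 := by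
          field_simp
        rw [expand]
        nlinarith [sq_nonneg ((1 - η * L) * ‖p - x‖ - 2 * η * ‖ξ₀‖)]
      linarith
    -- Lipschitz of prox
    have hlip : ‖p - pbar‖ ≤ η * ‖ξ₀‖ := by
      have h8 := prox_lip Ω hΩconv prox hprox (x - η • g) (x - η • f' x)
      rw [← hpdef, ← hpbar] at h8
      have h9 : (x - η • g) - (x - η • f' x) = (-η) • ξ₀ := by rw [hg]; module
      rw [h9, norm_smul, Real.norm_eq_abs, abs_neg, abs_of_pos hη] at h8
      exact h8
    -- G bound
    have hG : ‖x - pbar‖ ^ 2 ≤ 2 * ‖p - x‖ ^ 2 + 2 * η ^ 2 * ‖ξ₀‖ ^ 2 := by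
      have htri : ‖x - pbar‖ ≤ ‖x - p‖ + ‖p - pbar‖ := norm_sub_le_norm_sub_add_norm_sub _ _ _
      have hxp : ‖x - p‖ = ‖p - x‖ := norm_sub_rev _ _
      have h10 : ‖x - pbar‖ ^ 2 ≤ (‖p - x‖ + ‖p - pbar‖) ^ 2 :=
        pow_le_pow_left₀ (norm_nonneg _) (hxp ▸ htri) 2
      have h11 : ‖p - pbar‖ ^ 2 ≤ (η * ‖ξ₀‖) ^ 2 :=
        pow_le_pow_left₀ (norm_nonneg _) hlip 2
      nlinarith [h10, h11, sq_nonneg (‖p - x‖ - ‖p - pbar‖)]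
    have hG' : -((1 - η * L) / 4 * ‖p - x‖ ^ 2) ≤
        -((1 - η * L) / 8 * ‖x - pbar‖ ^ 2) + (1 - η * L) / 4 * η ^ 2 * ‖ξ₀‖ ^ 2 := by
      nlinarith [hG, hβ.le]
    have hpl := hPL x
    rw [← hpbar] at hpl
    have hpl' : (1 - η * L) / 4 * (μPL * (F x - Fstar)) ≤
        (1 - η * L) / 8 * ‖x - pbar‖ ^ 2 := by
      nlinarith [hpl, hβ.le]
    rw [hup]
    linarith [hdesc, hyoung, hG', hpl']
  -- integration
  have hle : MeasurableSpace.comap xt inferInstance ≤ ‹MeasurableSpace W› := hxt.comap_le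
  haveI : SigmaFinite (μ.trim hle) := by
    haveI : IsFiniteMeasure (μ.trim hle) := by
      constructor
      rw [trim_measurableSet_eq hle MeasurableSet.univ]
      exact measure_lt_top μ _
    infer_instance
  have hξint : ∫ ω, ‖ξ ω‖ ^ 2 ∂μ ≤ σ ^ 2 := by
    have h1 : ∫ ω, (μ[(fun ω' => ‖ξ ω'‖ ^ 2) | MeasurableSpace.comap xt inferInstance]) ω ∂μ
        = ∫ ω, ‖ξ ω‖ ^ 2 ∂μ := integral_condExp hle
    have h2 : ∫ ω, (μ[(fun ω' => ‖ξ ω'‖ ^ 2) | MeasurableSpace.comap xt inferInstance]) ω ∂μ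
        ≤ ∫ _ω, σ ^ 2 ∂μ := integral_mono_ae integrable_condExp (integrable_const _) hvar
    rw [h1, integral_const] at h2
    simpa using h2
  have hintA : Integrable (fun ω => F (xt ω) - Fstar) μ := hintF.sub (integrable_const _)
  have hintB : Integrable (fun ω => F (xt1 ω) - Fstar) μ := hintF1.sub (integrable_const _)
  have hmono : ∫ ω, (F (xt1 ω) - Fstar) ∂μ ≤
      ∫ ω, ((1 - μPL * (1 - η * L) / 4) * (F (xt ω) - Fstar) +
        (η ^ 2 * ((1 - η * L) / 4 + 1 / (1 - η * L))) * ‖ξ ω‖ ^ 2) ∂μ :=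
    integral_mono hintB ((hintA.const_mul _).add (hintξ.const_mul _)) hpoint
  rw [integral_add (hintA.const_mul _) (hintξ.const_mul _), integral_const_mul,
    integral_const_mul] at hmono
  have hC2 : 0 ≤ η ^ 2 * ((1 - η * L) / 4 + 1 / (1 - η * L)) := by
    have h1 : (0:ℝ) ≤ (1 - η * L) / 4 := by linarith
    have h2 : (0:ℝ) ≤ 1 / (1 - η * L) := by positivity
    positivity
  have hfin := mul_le_mul_of_nonneg_left hξint hC2
  nlinarith [hmono, hfin]
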